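/- Let G = (V,E) be a finite simple undirected graph and S ⊆ V an independent set (no edge of G joins two vertices of S). Let ℓ, ℓ' be labelings with ℓ'(u) = ℓ(u) for all u ∉ S, and suppose c_ℓ(v, ℓ'(v)) ≥ c_ℓ(v, ℓ(v)) for every v ∈ S. Then f(ℓ') ≥ f(ℓ). If moreover c_ℓ(v, ℓ'(v)) > c_ℓ(v, ℓ(v)) for at least one v ∈ S, then f(ℓ') > f(ℓ). More precisely, f(ℓ') − f(ℓ) = Σ_{v∈S} (c_ℓ(v, ℓ'(v)) − c_ℓ(v, ℓ(v))). -/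

import Mathlib

/-- The number of neighbors of `v` that carry label `l` under the labeling `ℓ`. -/
def nbrCount {V : Type*} [Fintype V] [DecidableEq V] {L : Type*} [DecidableEq L]
    (G : SimpleGraph V) [DecidableRel G.Adj] (ℓ : V → L) (v : V) (l : L) : ℕ :=
  ((G.neighborFinset v).filter fun u => ℓ u = l).card

/-- The number of monochromatic edges of `G` under the labeling `ℓ`. -/
def monoCount {V : Type*} [Fintype V] [DecidableEq V] {L : Type*} [DecidableEq L]
    (G : SimpleGraph V) [DecidableRel G.Adj] (ℓ : V → L) : ℕ :=
  (G.edgeFinset.filter fun e =>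
      Sym2.lift ⟨fun a b => decide (ℓ a = ℓ b),
        fun a b => decide_eq_decide.mpr eq_comm⟩ e = true).card

section Aux
variable {V : Type*} [Fintype V] [DecidableEq V] {L : Type*} [DecidableEq L]

/-- The subgraph of monochromatic edges. -/
def monoGraph (G : SimpleGraph V) (ℓ : V → L) : SimpleGraph V where
  Adj u v := G.Adj u v ∧ ℓ u = ℓ v
  symm := ⟨fun u v ⟨h1, h2⟩ => ⟨h1.symm, h2.symm⟩⟩
  loopless := ⟨fun v ⟨h1, _⟩ => G.loopless.irrefl v h1⟩

instance (G : SimpleGraph V) [DecidableRel G.Adj] (ℓ : V → L) :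
    DecidableRel (monoGraph G ℓ).Adj := fun _ _ => instDecidableAnd

lemma monoCount_eq (G : SimpleGraph V) [DecidableRel G.Adj] (ℓ : V → L) :
    monoCount G ℓ = (monoGraph G ℓ).edgeFinset.card := by
  unfold monoCount
  congr 1
  ext e
  induction e using Sym2.ind with
  | _ a b =>
    simp only [SimpleGraph.mem_edgeFinset]
    simp [monoGraph]

lemma monoGraph_degree (G : SimpleGraph V) [DecidableRel G.Adj] (ℓ : V → L) (v : V) :
    (monoGraph G ℓ).degree v = nbrCount G ℓ v (ℓ v) := by
  unfold nbrCount
  rw [← SimpleGraph.card_neighborFinset_eq_degree]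
  congr 1
  ext u
  simp only [SimpleGraph.mem_neighborFinset]
  simp [monoGraph]
  intro _
  exact eq_comm

lemma handshake (G : SimpleGraph V) [DecidableRel G.Adj] (ℓ : V → L) :
    ∑ v, nbrCount G ℓ v (ℓ v) = 2 * monoCount G ℓ := by
  rw [monoCount_eq]
  rw [← SimpleGraph.sum_degrees_eq_twice_card_edges]
  exact Finset.sum_congr rfl fun v _ => (monoGraph_degree G ℓ v).symm

lemma nbrCount_cast (G : SimpleGraph V) [DecidableRel G.Adj] (ℓ : V → L) (v : V) (l : L) :
    (nbrCount G ℓ v l : ℤ) = ∑ u, if G.Adj v u ∧ ℓ u = l then 1 else 0 := by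
  unfold nbrCount
  rw [SimpleGraph.neighborFinset_eq_filter, Finset.filter_filter, Finset.card_filter]
  push_cast
  rfl

end Aux

/-- Simultaneously updating the labels on an independent set `S`, each vertex moving to a
label at least as frequent among its neighbors as its current one, never decreases the
number of monochromatic edges; if at least one update is strict, the count strictly
increases; and the exact increment is the sum over `S` of the neighbor-count gains. -/
theorem independent_set_update
    {V : Type*} [Fintype V] [DecidableEq V] {L : Type*} [DecidableEq L]
    (G : SimpleGraph V) [DecidableRel G.Adj] (S : Finset V)
    (hS : ∀ u ∈ S, ∀ w ∈ S, ¬ G.Adj u w)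
    (ℓ ℓ' : V → L) (hoff : ∀ u ∉ S, ℓ' u = ℓ u)
    (hge : ∀ v ∈ S, nbrCount G ℓ v (ℓ v) ≤ nbrCount G ℓ v (ℓ' v)) :
    monoCount G ℓ ≤ monoCount G ℓ' ∧
    ((∃ v ∈ S, nbrCount G ℓ v (ℓ v) < nbrCount G ℓ v (ℓ' v)) →
      monoCount G ℓ < monoCount G ℓ') ∧
    (monoCount G ℓ' : ℤ) - (monoCount G ℓ : ℤ) =
      ∑ v ∈ S, ((nbrCount G ℓ v (ℓ' v) : ℤ) - (nbrCount G ℓ v (ℓ v) : ℤ)) := by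
  -- neighbors of vertices in S are outside S
  have hnbr : ∀ v ∈ S, ∀ u, G.Adj v u → u ∉ S := by
    intro v hv u hadj hu
    exact hS v hv u hu hadj
  -- nbrCount with ℓ' equals nbrCount with ℓ at vertices of S
  have hsame : ∀ v ∈ S, ∀ l, nbrCount G ℓ' v l = nbrCount G ℓ v l := by
    intro v hv l
    unfold nbrCount
    apply Finset.card_bij (fun u _ => u) <;> intro u hu <;>
      simp only [Finset.mem_filter, SimpleGraph.mem_neighborFinset] at *
    · exact ⟨hu.1, by rw [← hoff u (hnbr v hv u hu.1)]; exact hu.2⟩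
    · intros; assumption
    · exact ⟨u, by simpa [hoff u (hnbr v hv u hu.1)] using hu, rfl⟩
  -- the double-sum function
  set g : V → V → ℤ := fun v u =>
    (if G.Adj v u ∧ ℓ' u = ℓ v then 1 else 0) - (if G.Adj v u ∧ ℓ u = ℓ v then 1 else 0) with hg
  have hg_zero_right : ∀ v u, u ∉ S → g v u = 0 := by
    intro v u hu
    simp [hg, hoff u hu]
  have hg_zero_left : ∀ v ∈ S, ∀ u, g v u = 0 := by
    intro v hv u
    by_cases hadj : G.Adj v u
    · have := hoff u (hnbr v hv u hadj)
      simp [hg, this]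
    · simp [hg, hadj]
  -- key: per-vertex difference
  have key : ∑ v, ((nbrCount G ℓ' v (ℓ' v) : ℤ) - (nbrCount G ℓ v (ℓ v) : ℤ)) =
      2 * ∑ v ∈ S, ((nbrCount G ℓ v (ℓ' v) : ℤ) - (nbrCount G ℓ v (ℓ v) : ℤ)) := by
    have split : ∀ v, ((nbrCount G ℓ' v (ℓ' v) : ℤ) - (nbrCount G ℓ v (ℓ v) : ℤ)) =
        (if v ∈ S then ((nbrCount G ℓ v (ℓ' v) : ℤ) - (nbrCount G ℓ v (ℓ v) : ℤ)) else 0)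
        + ∑ u, g v u := by
      intro v
      by_cases hv : v ∈ S
      · have h0 : ∑ u, g v u = 0 := Finset.sum_eq_zero fun u _ => hg_zero_left v hv u
        rw [h0, if_pos hv, hsame v hv]
        ring
      · rw [if_neg hv]
        have hv' : ℓ' v = ℓ v := hoff v hv
        rw [nbrCount_cast, nbrCount_cast, hv', zero_add, hg]
        rw [Finset.sum_sub_distrib]
    calc ∑ v, ((nbrCount G ℓ' v (ℓ' v) : ℤ) - (nbrCount G ℓ v (ℓ v) : ℤ))
        = ∑ v, ((if v ∈ S then ((nbrCount G ℓ v (ℓ' v) : ℤ) - (nbrCount G ℓ v (ℓ v) : ℤ)) else 0)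
            + ∑ u, g v u) := Finset.sum_congr rfl fun v _ => split v
      _ = (∑ v ∈ S, ((nbrCount G ℓ v (ℓ' v) : ℤ) - (nbrCount G ℓ v (ℓ v) : ℤ)))
            + ∑ v, ∑ u, g v u := by
          rw [Finset.sum_add_distrib, Finset.sum_ite_mem, Finset.univ_inter]
      _ = (∑ v ∈ S, ((nbrCount G ℓ v (ℓ' v) : ℤ) - (nbrCount G ℓ v (ℓ v) : ℤ)))
            + ∑ u, ∑ v, g v u := by rw [Finset.sum_comm]
      _ = (∑ v ∈ S, ((nbrCount G ℓ v (ℓ' v) : ℤ) - (nbrCount G ℓ v (ℓ v) : ℤ)))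
            + ∑ u, (if u ∈ S then ((nbrCount G ℓ u (ℓ' u) : ℤ) - (nbrCount G ℓ u (ℓ u) : ℤ)) else 0) := by
          congr 1
          refine Finset.sum_congr rfl fun u _ => ?_
          by_cases hu : u ∈ S
      -- compute the inner column sum
          · rw [if_pos hu]
            have : ∑ v, g v u =
                (nbrCount G ℓ u (ℓ' u) : ℤ) - (nbrCount G ℓ u (ℓ u) : ℤ) := by
              rw [nbrCount_cast, nbrCount_cast, ← Finset.sum_sub_distrib]
              refine Finset.sum_congr rfl fun v _ => ?_
              simp only [hg]
              congr 1 <;> simp [G.adj_comm, eq_comm, and_comm]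
            exact this
          · rw [if_neg hu]
            exact Finset.sum_eq_zero fun v _ => hg_zero_right v u hu
      _ = 2 * ∑ v ∈ S, ((nbrCount G ℓ v (ℓ' v) : ℤ) - (nbrCount G ℓ v (ℓ v) : ℤ)) := by
          rw [Finset.sum_ite_mem, Finset.univ_inter]; ring
  -- handshake for both labelings
  have h1 := handshake G ℓ
  have h2 := handshake G ℓ'
  have hsum : (2 : ℤ) * ((monoCount G ℓ' : ℤ) - (monoCount G ℓ : ℤ)) =
      2 * ∑ v ∈ S, ((nbrCount G ℓ v (ℓ' v) : ℤ) - (nbrCount G ℓ v (ℓ v) : ℤ)) := by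
    rw [← key, Finset.sum_sub_distrib]
    have c1 : (∑ v, (nbrCount G ℓ v (ℓ v) : ℤ)) = 2 * (monoCount G ℓ : ℤ) := by
      exact_mod_cast congrArg (Nat.cast : ℕ → ℤ) h1
    have c2 : (∑ v, (nbrCount G ℓ' v (ℓ' v) : ℤ)) = 2 * (monoCount G ℓ' : ℤ) := by
      exact_mod_cast congrArg (Nat.cast : ℕ → ℤ) h2
    rw [c1, c2]; ring
  have heq : (monoCount G ℓ' : ℤ) - (monoCount G ℓ : ℤ) =
      ∑ v ∈ S, ((nbrCount G ℓ v (ℓ' v) : ℤ) - (nbrCount G ℓ v (ℓ v) : ℤ)) := by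
    linarith
  have hnonneg : ∀ v ∈ S, (0 : ℤ) ≤ (nbrCount G ℓ v (ℓ' v) : ℤ) - (nbrCount G ℓ v (ℓ v) : ℤ) := by
    intro v hv
    have := hge v hv
    omega
  refine ⟨?_, ?_, heq⟩
  · have : (0 : ℤ) ≤ ∑ v ∈ S, ((nbrCount G ℓ v (ℓ' v) : ℤ) - (nbrCount G ℓ v (ℓ v) : ℤ)) :=
      Finset.sum_nonneg hnonneg
    omega
  · rintro ⟨v, hv, hlt⟩
    have hlt' : (nbrCount G ℓ v (ℓ v) : ℤ) < (nbrCount G ℓ v (ℓ' v) : ℤ) := by exact_mod_cast hlt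
    have : (0 : ℤ) < ∑ v ∈ S, ((nbrCount G ℓ v (ℓ' v) : ℤ) - (nbrCount G ℓ v (ℓ v) : ℤ)) :=
      Finset.sum_pos' hnonneg ⟨v, hv, by omega⟩
    omega
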